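/- Let 𝒞 be an abelian category, w an admissible class of morphisms of 𝒞 such that (𝒞, w) satisfies the factorization axiom, and S a w-Serre subcategory of 𝒞. Suppose given monomorphisms i : x → z and i' : x → z' and morphisms p : z → y and p' : z' → y, both p and p' lying in w, such that p∘i = p'∘i'. Then coker(i) lies in S if and only if coker(i') lies in S. -/

import Mathlib

open CategoryTheory CategoryTheory.Limits ZeroObject
open CategoryTheory.Abelian CategoryTheory.Abelian.Pseudoelement
open scoped Pseudoelement

universe v u


/-- An *admissible class* of morphisms in an abelian category: it contains all
isomorphisms, satisfies the two-out-of-three property, and in any morphism of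
short exact sequences, if two of the three vertical morphisms lie in the class
then so does the third. -/
structure AdmissibleClass {C : Type u} [Category.{v} C] [Abelian C]
    (w : MorphismProperty C) : Prop where
  of_isIso : ∀ {x y : C} (f : x ⟶ y), IsIso f → w f
  comp_mem : ∀ {x y z : C} (f : x ⟶ y) (g : y ⟶ z), w f → w g → w (f ≫ g)
  of_comp_left : ∀ {x y z : C} (f : x ⟶ y) (g : y ⟶ z), w g → w (f ≫ g) → w f
  of_comp_right : ∀ {x y z : C} (f : x ⟶ y) (g : y ⟶ z), w f → w (f ≫ g) → w g
  ses_fst : ∀ {S₁ S₂ : ShortComplex C}, S₁.ShortExact → S₂.ShortExact →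
    ∀ (φ : S₁ ⟶ S₂), w φ.τ₂ → w φ.τ₃ → w φ.τ₁
  ses_snd : ∀ {S₁ S₂ : ShortComplex C}, S₁.ShortExact → S₂.ShortExact →
    ∀ (φ : S₁ ⟶ S₂), w φ.τ₁ → w φ.τ₃ → w φ.τ₂
  ses_trd : ∀ {S₁ S₂ : ShortComplex C}, S₁.ShortExact → S₂.ShortExact →
    ∀ (φ : S₁ ⟶ S₂), w φ.τ₁ → w φ.τ₂ → w φ.τ₃

/-- A *`w`-Serre subcategory* of an abelian category `C`, encoded as the set of
its objects: it is closed under isomorphisms, in any short exact sequence if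
two of the three terms belong to it then so does the third, and it is
`w`-closed (closed under sources and targets of morphisms of `w`, hence under
finite zig-zags of morphisms of `w`). -/
structure IsWSerre {C : Type u} [Category.{v} C] [Abelian C]
    (w : MorphismProperty C) (S : Set C) : Prop where
  iso_closed : ∀ {x y : C}, (x ≅ y) → x ∈ S → y ∈ S
  ses_fst : ∀ {T : ShortComplex C}, T.ShortExact → T.X₂ ∈ S → T.X₃ ∈ S → T.X₁ ∈ S
  ses_snd : ∀ {T : ShortComplex C}, T.ShortExact → T.X₁ ∈ S → T.X₃ ∈ S → T.X₂ ∈ S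
  ses_trd : ∀ {T : ShortComplex C}, T.ShortExact → T.X₁ ∈ S → T.X₂ ∈ S → T.X₃ ∈ S
  w_src : ∀ {x y : C} (f : x ⟶ y), w f → y ∈ S → x ∈ S
  w_tgt : ∀ {x y : C} (f : x ⟶ y), w f → x ∈ S → y ∈ S

/-- The pair `(C, w)` satisfies the *factorization axiom*: every morphism `f`
factors as a monomorphism (cofibration) followed by a morphism of `w`. -/
def HasFactorizations {C : Type u} [Category.{v} C] [Abelian C]
    (w : MorphismProperty C) : Prop :=
  ∀ {x y : C} (f : x ⟶ y),
    ∃ (u : C) (i : x ⟶ u) (p : u ⟶ y), Mono i ∧ w p ∧ i ≫ p = f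

/-- The class `w_S` of *`S`-weak equivalences*: morphisms admitting a
factorization as a monomorphism `i` followed by a morphism of `w`, with
`coker i` in `S`. -/
def SWeq {C : Type u} [Category.{v} C] [Abelian C]
    (w : MorphismProperty C) (S : Set C) : MorphismProperty C :=
  fun x y f =>
    ∃ (u : C) (i : x ⟶ u) (p : u ⟶ y),
      Mono i ∧ w p ∧ i ≫ p = f ∧ cokernel i ∈ S

/-- `C^u`: the full subcategory (set of objects) of those `x` such that the
morphism `0 ⟶ x` lies in `u`. -/
def objectsOf {C : Type u} [Category.{v} C] [Abelian C]
    (u : MorphismProperty C) : Set C :=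
  {x : C | u (0 : (0 : C) ⟶ x)}


variable {C : Type u} [Category.{v} C] [Abelian C]

lemma cokernelSequence_shortExact {x z : C} (i : x ⟶ z) [Mono i] :
    (ShortComplex.mk i (cokernel.π i) (cokernel.condition i)).ShortExact :=
  ShortComplex.ShortExact.mk' (ShortComplex.exact_of_g_is_cokernel _ (cokernelIsCokernel i))
    inferInstance inferInstance

lemma cokernel_comp_shortExact {x z z'' : C} (i : x ⟶ z) (j : z ⟶ z'') [Mono i] [Mono j] :
    (ShortComplex.mk (cokernel.map i (i ≫ j) (𝟙 x) j (by simp))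
      (cokernel.map (i ≫ j) j i (𝟙 z'') (by simp))
      (by apply coequalizer.hom_ext; simp)).ShortExact := by
  set c₁ := cokernel.map i (i ≫ j) (𝟙 x) j (by simp)
  set c₂ := cokernel.map (i ≫ j) j i (𝟙 z'') (by simp)
  have hc₁ : cokernel.π i ≫ c₁ = j ≫ cokernel.π (i ≫ j) := by simp [c₁]
  have hc₂ : cokernel.π (i ≫ j) ≫ c₂ = cokernel.π j := by simp [c₂]
  have mono_c₁ : Mono c₁ := by
    apply mono_of_zero_of_map_zero
    intro a ha
    obtain ⟨b, hb⟩ := pseudo_surjective_of_epi (cokernel.π i) a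
    have h1 : (cokernel.π (i ≫ j)) (j b) = 0 := by
      rw [← Pseudoelement.comp_apply, ← hc₁, Pseudoelement.comp_apply, hb, ha]
    obtain ⟨a', ha'⟩ := pseudo_exact_of_exact (cokernelSequence_shortExact (i ≫ j)).exact _ h1
    have : i a' = b := by
      apply pseudo_injective_of_mono j
      rw [← Pseudoelement.comp_apply]; exact ha'
    rw [← hb, ← this, ← Pseudoelement.comp_apply, cokernel.condition, Pseudoelement.zero_apply]
  have epi_c₂ : Epi c₂ := by
    apply epi_of_pseudo_surjective
    intro a
    obtain ⟨b, hb⟩ := pseudo_surjective_of_epi (cokernel.π j) a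
    exact ⟨(cokernel.π (i ≫ j)) b, by rw [← Pseudoelement.comp_apply, hc₂, hb]⟩
  have exact : (ShortComplex.mk c₁ c₂ (by apply coequalizer.hom_ext; simp [c₁, c₂])).Exact := by
    apply exact_of_pseudo_exact
    intro b hb
    obtain ⟨b', hb'⟩ := pseudo_surjective_of_epi (cokernel.π (i ≫ j)) b
    have h1 : (cokernel.π j) b' = 0 := by
      rw [← hc₂, Pseudoelement.comp_apply, hb']; exact hb
    obtain ⟨c, hc⟩ := pseudo_exact_of_exact (cokernelSequence_shortExact j).exact _ h1
    refine ⟨(cokernel.π i) c, ?_⟩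
    rw [← Pseudoelement.comp_apply, hc₁, Pseudoelement.comp_apply, hc, hb']
  exact ShortComplex.ShortExact.mk' exact mono_c₁ epi_c₂

lemma zero_mem_of_mem {w : MorphismProperty C} {S : Set C}
    (hS : ∀ {T : ShortComplex C}, T.ShortExact → T.X₂ ∈ S → T.X₃ ∈ S → T.X₁ ∈ S)
    {c : C} (hc : c ∈ S) : (0 : C) ∈ S := by
  have hmono : Mono (0 : (0 : C) ⟶ c) :=
    ⟨fun g h _ => (isZero_zero C).eq_of_tgt g h⟩
  have hex : (ShortComplex.mk (0 : (0 : C) ⟶ c) (𝟙 c) (by simp)).ShortExact :=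
    ShortComplex.ShortExact.mk'
      ((ShortComplex.exact_iff_mono _ rfl).2 inferInstance) hmono inferInstance
  exact hS hex hc hc

lemma w_cokernel_to_zero {w : MorphismProperty C} (hw : AdmissibleClass w)
    {z z'' y : C} (j : z ⟶ z'') [Mono j] (p : z ⟶ y) (r : z'' ⟶ y)
    (hp : w p) (hr : w r) (hjr : j ≫ r = p) :
    w (0 : cokernel j ⟶ (0 : C)) := by
  have hepi : Epi (0 : y ⟶ (0 : C)) := ⟨fun g h _ => (isZero_zero C).eq_of_src g h⟩
  have hS₂ : (ShortComplex.mk (𝟙 y) (0 : y ⟶ (0 : C)) (by simp)).ShortExact :=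
    ShortComplex.ShortExact.mk'
      ((ShortComplex.exact_iff_epi _ rfl).2 inferInstance) inferInstance hepi
  exact hw.ses_trd (cokernelSequence_shortExact j) hS₂
    { τ₁ := p, τ₂ := r, τ₃ := 0,
      comm₁₂ := by simp [hjr], comm₂₃ := by simp } hp hr

lemma mem_iff_of_mono_comp {w : MorphismProperty C} (hw : AdmissibleClass w)
    {S : Set C} (hS : IsWSerre w S)
    {x z z'' y : C} (i : x ⟶ z) (j : z ⟶ z'') (p : z ⟶ y) (r : z'' ⟶ y)
    [Mono i] [Mono j] (hp : w p) (hr : w r) (hjr : j ≫ r = p) :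
    cokernel i ∈ S ↔ cokernel (i ≫ j) ∈ S := by
  have key := cokernel_comp_shortExact i j
  constructor
  · intro h
    have h0 : (0 : C) ∈ S := zero_mem_of_mem (w := w) hS.ses_fst h
    have hj : cokernel j ∈ S :=
      hS.w_src _ (w_cokernel_to_zero hw j p r hp hr hjr) h0
    exact hS.ses_snd key h hj
  · intro h
    have h0 : (0 : C) ∈ S := zero_mem_of_mem (w := w) hS.ses_fst h
    have hj : cokernel j ∈ S :=
      hS.w_src _ (w_cokernel_to_zero hw j p r hp hr hjr) h0
    exact hS.ses_fst key h hj

theorem cokernel_mem_iff_of_factorizations {C : Type u} [Category.{v} C] [Abelian C]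
    {w : MorphismProperty C} (hw : AdmissibleClass w)
    (hfac : HasFactorizations w)
    {S : Set C} (hS : IsWSerre w S)
    {x z z' y : C} (i : x ⟶ z) (i' : x ⟶ z') (p : z ⟶ y) (p' : z' ⟶ y)
    (hi : Mono i) (hi' : Mono i') (hp : w p) (hp' : w p')
    (hcomm : i ≫ p = i' ≫ p') :
    cokernel i ∈ S ↔ cokernel i' ∈ S := by
  haveI := hi; haveI := hi'
  obtain ⟨u, k, r, hk, hr, hkr⟩ := hfac (pushout.desc p p' hcomm)
  haveI := hk
  set j : z ⟶ u := pushout.inl i i' ≫ k with hj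
  set j' : z' ⟶ u := pushout.inr i i' ≫ k with hj'
  haveI : Mono j := mono_comp _ _
  haveI : Mono j' := mono_comp _ _
  have hjr : j ≫ r = p := by rw [hj, Category.assoc, hkr, pushout.inl_desc]
  have hjr' : j' ≫ r = p' := by rw [hj', Category.assoc, hkr, pushout.inr_desc]
  have heq : i ≫ j = i' ≫ j' := by
    rw [hj, hj', ← Category.assoc, ← Category.assoc, pushout.condition]
  calc cokernel i ∈ S ↔ cokernel (i ≫ j) ∈ S :=
        mem_iff_of_mono_comp hw hS i j p r hp hr hjr
    _ ↔ cokernel (i' ≫ j') ∈ S := by rw [heq]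
    _ ↔ cokernel i' ∈ S :=
        (mem_iff_of_mono_comp hw hS i' j' p' r hp' hr hjr').symm
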